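/- The multiplicity of L⁻¹ as a root of P equals 3 if and only if Conditions (I) and (II) hold and Condition (III) fails. -/

import Mathlib

open Polynomial

/-- The quadratic factor `h(X) = 1 − (s a² − 2 s e L^{k−1}) X + s² e² L^{2k−2} X²`
of the reduced Euler factor. -/
noncomputable def hPoly (F : Type*) [Field F] (a e s L : F) (k : ℕ) : F[X] :=
  1 - C (s * a ^ 2 - 2 * s * e * L ^ (k - 1)) * X + C (s ^ 2 * e ^ 2 * L ^ (2 * k - 2)) * X ^ 2

/-- The linear factor `g(X) = 1 − e s L^{k−1} X` of the reduced Euler factor. -/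
noncomputable def gPoly (F : Type*) [Field F] (e s L : F) (k : ℕ) : F[X] :=
  1 - C (e * s * L ^ (k - 1)) * X

/-- Condition (I): `e s L^{k−2} = 1`. -/
def condI (F : Type*) [Field F] (e s L : F) (k : ℕ) : Prop :=
  e * s * L ^ (k - 2) = 1

/-- Condition (II): `s⁻¹ a² e⁻² L^{3−2k} − 2 s⁻¹ e⁻¹ L^{2−k} − s⁻² e⁻² L^{4−2k} = 1`. -/
def condII (F : Type*) [Field F] (a e s L : F) (k : ℕ) : Prop :=
  s⁻¹ * a ^ 2 * (e⁻¹) ^ 2 * L ^ ((3 : ℤ) - 2 * k)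
    - 2 * s⁻¹ * e⁻¹ * L ^ ((2 : ℤ) - k)
    - (s⁻¹) ^ 2 * (e⁻¹) ^ 2 * L ^ ((4 : ℤ) - 2 * k) = 1

/-- Condition (III): `s⁻² e⁻² L^{4−2k} ≠ 1`. -/
def condIII (F : Type*) [Field F] (e s L : F) (k : ℕ) : Prop :=
  (s⁻¹) ^ 2 * (e⁻¹) ^ 2 * L ^ ((4 : ℤ) - 2 * k) ≠ 1


section
variable {F : Type*} [Field F]

lemma cube_expand (d r : F) :
    (X - C r) ^ 3 * C d = Cubic.toPoly ⟨d, -(3 * r * d), 3 * r ^ 2 * d, -(r ^ 3 * d)⟩ := by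
  simp only [Cubic.toPoly, C_neg, C_mul, C_pow, map_ofNat]
  ring

lemma key_mult (b c1 c2 L : F) (hL : L ≠ 0) (hb0 : b ≠ 0) (hc20 : c2 ≠ 0) :
    (Cubic.toPoly ⟨-(c2 * b), c2 + c1 * b, -(c1 + b), 1⟩).rootMultiplicity L⁻¹ = 3
      ↔ (b = L ∧ c1 = 2 * L ∧ c2 = L ^ 2) := by
  set P : F[X] := Cubic.toPoly ⟨-(c2 * b), c2 + c1 * b, -(c1 + b), 1⟩ with hP
  have ha0 : -(c2 * b) ≠ 0 := by simpa using mul_ne_zero hc20 hb0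
  have hP0 : P ≠ 0 := Cubic.ne_zero_of_a_ne_zero ha0
  have hPdeg : P.natDegree = 3 := Cubic.natDegree_of_a_ne_zero ha0
  constructor
  · intro hm
    obtain ⟨q, hq⟩ : (X - C L⁻¹) ^ 3 ∣ P := (le_rootMultiplicity_iff hP0).1 hm.symm.le
    have hq0 : q ≠ 0 := by rintro rfl; rw [mul_zero] at hq; exact hP0 hq
    have hx0 : ((X - C L⁻¹ : F[X]) ^ 3) ≠ 0 := pow_ne_zero _ (X_sub_C_ne_zero _)
    have hxdeg : ((X - C L⁻¹ : F[X]) ^ 3).natDegree = 3 := by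
      simp [natDegree_pow]
    have hqdeg : q.natDegree = 0 := by
      have := natDegree_mul hx0 hq0
      rw [← hq, hPdeg, hxdeg] at this
      omega
    obtain ⟨d, rfl⟩ : ∃ d, q = C d := ⟨q.coeff 0, eq_C_of_natDegree_eq_zero hqdeg⟩
    have hlead : ((X - C L⁻¹ : F[X]) ^ 3).coeff 3 = 1 := by
      have h := ((monic_X_sub_C (L⁻¹ : F)).pow (n := 3)).coeff_natDegree
      rwa [hxdeg] at h
    have hd : d = -(c2 * b) := by
      have h3 := congrArg (fun p => coeff p 3) hq
      simp only [hP, Cubic.coeff_eq_a, coeff_mul_C, hlead, one_mul] at h3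
      exact h3.symm
    rw [hd] at hq
    rw [hP, cube_expand, Cubic.toPoly_injective, Cubic.mk.injEq] at hq
    obtain ⟨-, e2, e3, e4⟩ := hq
    have hA : c2 * b = L ^ 3 := by
      field_simp at e4
      linear_combination -e4
    have hB : c1 + b = 3 * L := by
      field_simp at e3
      apply mul_right_cancel₀ (pow_ne_zero 2 hL)
      linear_combination -e3 + 3 * hA
    have hC : c2 + c1 * b = 3 * L ^ 2 := by
      field_simp at e2
      apply mul_right_cancel₀ hL
      linear_combination e2 + 3 * hA
    have hcube : (b - L) ^ 3 = 0 := by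
      linear_combination hA - b * hC + b ^ 2 * hB
    have hbL : b = L := by
      have := pow_eq_zero_iff (n := 3) (by norm_num) |>.1 hcube
      exact sub_eq_zero.1 this
    have hc1 : c1 = 2 * L := by linear_combination hB - hbL
    exact ⟨hbL, hc1, by linear_combination hC - b * hc1 - 2 * L * hbL⟩
  · rintro ⟨h1, h2, h3⟩
    have hPe : P = (X - C L⁻¹) ^ 3 * C (-(L ^ 3)) := by
      rw [hP, h1, h2, h3, cube_expand, Cubic.toPoly_injective]
      simp only [Cubic.mk.injEq]
      refine ⟨by ring, ?_, ?_, ?_⟩ <;> field_simp <;> ring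
    rw [hPe, rootMultiplicity_mul (by rw [← hPe]; exact hP0),
      rootMultiplicity_X_sub_C_pow, rootMultiplicity_C]

end

/-- Characterization of `d_{ℓ,f} = 3` from the end of the proof of Lemma 2.5: the multiplicity
of `L⁻¹` as a root of `P = h · g` equals `3` iff Conditions (I) and (II) hold and
Condition (III) fails. -/
theorem multiplicity_eq_three_iff (F : Type*) [Field F] (a e s L : F)
    (ha : a ≠ 0) (he : e ≠ 0) (hs : s ≠ 0) (hL : L ≠ 0) (k : ℕ) (hk : 2 ≤ k) :
    (hPoly F a e s L k * gPoly F e s L k).rootMultiplicity L⁻¹ = 3 ↔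
      condI F e s L k ∧ condII F a e s L k ∧ ¬ condIII F e s L k := by
  have hb0 : e * s * L ^ (k - 1) ≠ 0 :=
    mul_ne_zero (mul_ne_zero he hs) (pow_ne_zero _ hL)
  have hc20 : s ^ 2 * e ^ 2 * L ^ (2 * k - 2) ≠ 0 :=
    mul_ne_zero (mul_ne_zero (pow_ne_zero _ hs) (pow_ne_zero _ he)) (pow_ne_zero _ hL)
  have Pstd : hPoly F a e s L k * gPoly F e s L k
      = Cubic.toPoly ⟨-((s ^ 2 * e ^ 2 * L ^ (2 * k - 2)) * (e * s * L ^ (k - 1))),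
          (s ^ 2 * e ^ 2 * L ^ (2 * k - 2)) + (s * a ^ 2 - 2 * s * e * L ^ (k - 1)) * (e * s * L ^ (k - 1)),
          -((s * a ^ 2 - 2 * s * e * L ^ (k - 1)) + (e * s * L ^ (k - 1))), 1⟩ := by
    simp only [hPoly, gPoly, Cubic.toPoly, C_neg, C_mul, C_add, C_sub, C_pow, map_ofNat, map_one]
    ring
  rw [Pstd, key_mult _ _ _ L hL hb0 hc20]
  have hz1 : L ^ ((3:ℤ) - 2*k) = (L ^ (2*k-3))⁻¹ := by
    rw [show ((3:ℤ) - 2*(k:ℤ)) = -((2*k-3 : ℕ) : ℤ) from by omega, zpow_neg, zpow_natCast]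
  have hz2 : L ^ ((2:ℤ) - k) = (L ^ (k-2))⁻¹ := by
    rw [show ((2:ℤ) - (k:ℤ)) = -((k-2 : ℕ) : ℤ) from by omega, zpow_neg, zpow_natCast]
  have hz3 : L ^ ((4:ℤ) - 2*k) = (L ^ (2*k-4))⁻¹ := by
    rw [show ((4:ℤ) - 2*(k:ℤ)) = -((2*k-4 : ℕ) : ℤ) from by omega, zpow_neg, zpow_natCast]
  have hk1 : k - 1 = (k - 2) + 1 := by omega
  have hk2 : 2 * k - 2 = ((k - 2) + (k - 2)) + 2 := by omega
  have hk3 : 2 * k - 3 = ((k - 2) + (k - 2)) + 1 := by omega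
  have hk4 : 2 * k - 4 = (k - 2) + (k - 2) := by omega
  simp only [condI, condII, condIII, hz1, hz2, hz3, hk1, hk2, hk3, hk4, pow_add, pow_one, ne_eq, not_not]
  set u : F := L ^ (k - 2) with hu
  have hu0 : u ≠ 0 := pow_ne_zero _ hL
  constructor
  · rintro ⟨h1, h2, h3⟩
    have he1 : e * s * u = 1 := by
      apply mul_right_cancel₀ hL
      linear_combination h1
    have hD : s * e ^ 2 * (u * u * L) * (s * e * u) ≠ 0 :=
      mul_ne_zero (mul_ne_zero (mul_ne_zero hs (pow_ne_zero 2 he))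
        (mul_ne_zero (mul_ne_zero hu0 hu0) hL)) (mul_ne_zero (mul_ne_zero hs he) hu0)
    refine ⟨he1, ?_, ?_⟩
    · field_simp [he, hs, hL, hu0]
      apply mul_left_cancel₀ hs
      linear_combination s * h2 - s * L * (e*s*u + 1) * he1
    · field_simp [he, hs, hL, hu0]
      linear_combination -(e*s*u + 1) * he1
  · rintro ⟨h1, h2, h3⟩
    have hD : s * e ^ 2 * (u * u * L) * (s * e * u) ≠ 0 :=
      mul_ne_zero (mul_ne_zero (mul_ne_zero hs (pow_ne_zero 2 he))
        (mul_ne_zero (mul_ne_zero hu0 hu0) hL)) (mul_ne_zero (mul_ne_zero hs he) hu0)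
    field_simp [he, hs, hL, hu0] at h2 h3
    refine ⟨?_, ?_, ?_⟩
    · linear_combination L * h1
    · linear_combination h2 + L * (e*s*u + 1) * h1
    · linear_combination L^2 * (e*s*u + 1) * h1
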